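/- Let a ∈ ℂ with |a| > 2 and let z₀ ∈ ℂ with |z₀| > 5/3. Then the forward orbit z_{n+1} = f(z_n) is well-defined for all n ∈ ℕ (i.e., z_n² ≠ 1 for every n), and |z_n| > |a|ⁿ·|z₀| for every n ≥ 1; in particular |z_n| → ∞ as n → ∞. -/

import Mathlib

lemma example_map_key (a w : ℂ) (ha : 2 < ‖a‖) (hw : 5 / 3 < ‖w‖) :
    w ^ 2 ≠ 1 ∧
    ‖a‖ * ‖w‖ <
      ‖a * (w ^ 2 - 1) + 1 / (4 * a * (w ^ 2 - 1))‖ := by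
  set t := ‖w‖ with ht
  set D := ‖w ^ 2 - 1‖ with hDdef
  set A := ‖a‖ with hA
  have h1 : t ^ 2 ≤ D + 1 := by
    calc t ^ 2 = ‖w ^ 2‖ := by rw [norm_pow]
      _ = ‖(w ^ 2 - 1) + 1‖ := by ring_nf
      _ ≤ D + ‖1‖ := norm_add_le _ _
      _ = D + 1 := by simp
  have hD : t ^ 2 - 1 ≤ D := by linarith
  have hDpos : (16:ℝ)/9 < D := by nlinarith
  have hd : w ^ 2 - 1 ≠ 0 := by
    intro h
    rw [hDdef, h] at hDpos
    simp at hDpos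
    linarith
  have ha0 : a ≠ 0 := by
    intro h; rw [hA, h] at ha; simp at ha; linarith
  refine ⟨sub_ne_zero.mp hd, ?_⟩
  have tri := norm_sub_norm_le (a * (w ^ 2 - 1)) (-(1 / (4 * a * (w ^ 2 - 1))))
  rw [sub_neg_eq_add, norm_neg] at tri
  have habs1 : ‖a * (w ^ 2 - 1)‖ = A * D := by rw [norm_mul]
  have habs2 : ‖1 / (4 * a * (w ^ 2 - 1))‖ = 1 / (4 * A * D) := by
    rw [norm_div, norm_mul, norm_mul, norm_one, ← hDdef, ← hA]
    norm_num
  rw [habs1, habs2] at tri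
  have hADpos : (0:ℝ) < 4 * A * D := by positivity
  have hsmall : 1 / (4 * A * D) ≤ 9 / 128 := by
    rw [div_le_div_iff₀ hADpos (by norm_num)]
    nlinarith
  have hmain : A * t + 9 / 128 < A * D := by nlinarith
  linarith

theorem example_map_orbit_escapes (a z₀ : ℂ) (ha : 2 < ‖a‖)
    (hz₀ : 5 / 3 < ‖z₀‖) (z : ℕ → ℂ) (h0 : z 0 = z₀)
    (hrec : ∀ n : ℕ, z (n + 1) = a * ((z n) ^ 2 - 1) + 1 / (4 * a * ((z n) ^ 2 - 1))) :
    (∀ n : ℕ, (z n) ^ 2 ≠ 1) ∧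
    (∀ n : ℕ, 1 ≤ n → ‖a‖ ^ n * ‖z₀‖ < ‖z n‖) ∧
    Filter.Tendsto (fun n => ‖z n‖) Filter.atTop Filter.atTop := by
  set A := ‖a‖ with hA
  have hA1 : (1:ℝ) < A := by linarith
  have hz0pos : (0:ℝ) < ‖z₀‖ := by linarith [(by norm_num : (0:ℝ) < 5/3)]
  -- invariant
  have inv : ∀ n, A ^ n * ‖z₀‖ ≤ ‖z n‖ := by
    intro n
    induction n with
    | zero => simp [h0]
    | succ n ih =>
        have hbig : 5 / 3 < ‖z n‖ := by
          have h1 : (1:ℝ) ≤ A ^ n := one_le_pow₀ (le_of_lt hA1)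
          nlinarith
        have key := example_map_key a (z n) ha hbig
        rw [hrec n]
        calc A ^ (n + 1) * ‖z₀‖ = A * (A ^ n * ‖z₀‖) := by ring
          _ ≤ A * ‖z n‖ := by nlinarith
          _ ≤ _ := le_of_lt key.2
  have hbig : ∀ n, 5 / 3 < ‖z n‖ := by
    intro n
    have h1 : (1:ℝ) ≤ A ^ n := one_le_pow₀ (le_of_lt hA1)
    nlinarith [inv n]
  refine ⟨fun n => (example_map_key a (z n) ha (hbig n)).1, ?_, ?_⟩
  · intro n hn
    obtain ⟨m, rfl⟩ := Nat.exists_eq_add_of_le hn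
    have key := example_map_key a (z m) ha (hbig m)
    have := inv m
    rw [Nat.add_comm, hrec m]
    calc A ^ (m + 1) * ‖z₀‖ = A * (A ^ m * ‖z₀‖) := by ring
      _ ≤ A * ‖z m‖ := by nlinarith
      _ < _ := key.2
  · apply Filter.tendsto_atTop_mono inv
    exact (tendsto_pow_atTop_atTop_of_one_lt hA1).atTop_mul_const hz0pos
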